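/- The real Lie algebras aff(ℝ) ⊕ aff(ℝ) and g₄² are not isomorphic, but their complexifications ℂ ⊗_ℝ (aff(ℝ) ⊕ aff(ℝ)) and ℂ ⊗_ℝ g₄² are isomorphic as complex Lie algebras. -/
import Mathlib


open Module
open scoped TensorProduct

/-- Structure constants of the 4-dimensional real rigid Lie algebra `g₄²`
(for basis indices `i < j`): `[X₁,X₃] = X₂`, `[X₃,X₂] = X₁`, `[X₄,X₁] = X₁`, `[X₄,X₂] = X₂`
(in 1-indexed notation), all other brackets zero. -/
def c42 (i j : Fin 4) : Fin 4 → ℝ :=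
  if (i, j) = (0, 2) then ![0, 1, 0, 0]
  else if (i, j) = (1, 2) then ![-1, 0, 0, 0]
  else if (i, j) = (0, 3) then ![-1, 0, 0, 0]
  else if (i, j) = (1, 3) then ![0, -1, 0, 0]
  else 0

set_option maxHeartbeats 8000000 in
set_option maxRecDepth 8000 in
theorem aff_sum_vs_g42 {a : Type} [LieRing a] [LieAlgebra ℝ a]
    (ba : Basis (Bool × Bool) ℝ a)
    (ha1 : ∀ c : Bool, ⁅ba (c, false), ba (c, true)⁆ = ba (c, true))
    (ha2 : ∀ (c c' : Bool) (x y : Bool), c ≠ c' → ⁅ba (c, x), ba (c', y)⁆ = 0)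
    {m : Type} [LieRing m] [LieAlgebra ℝ m] (bm : Basis (Fin 4) ℝ m)
    (hm : ∀ i j : Fin 4, i < j → ⁅bm i, bm j⁆ = ∑ k, c42 i j k • bm k) :
    IsEmpty (a ≃ₗ⁅ℝ⁆ m) ∧ Nonempty ((ℂ ⊗[ℝ] a) ≃ₗ⁅ℂ⁆ (ℂ ⊗[ℝ] m)) := by
  classical
  -- bracket table in m
  have t01 : ⁅bm 0, bm 1⁆ = 0 := by
    simpa [c42, Fin.sum_univ_four] using hm 0 1 (by decide)
  have t02 : ⁅bm 0, bm 2⁆ = bm 1 := by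
    simpa [c42, Fin.sum_univ_four] using hm 0 2 (by decide)
  have t12 : ⁅bm 1, bm 2⁆ = -bm 0 := by
    simpa [c42, Fin.sum_univ_four] using hm 1 2 (by decide)
  have t03 : ⁅bm 0, bm 3⁆ = -bm 0 := by
    simpa [c42, Fin.sum_univ_four] using hm 0 3 (by decide)
  have t13 : ⁅bm 1, bm 3⁆ = -bm 1 := by
    simpa [c42, Fin.sum_univ_four] using hm 1 3 (by decide)
  have t23 : ⁅bm 2, bm 3⁆ = 0 := by
    simpa [c42, Fin.sum_univ_four] using hm 2 3 (by decide)
  have t20 : ⁅bm 2, bm 0⁆ = -bm 1 := by rw [← lie_skew, t02]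
  have t21 : ⁅bm 2, bm 1⁆ = bm 0 := by rw [← lie_skew, t12, neg_neg]
  constructor
  · -- Part 1: the real Lie algebras are not isomorphic
    constructor
    intro e
    set u : a := ba (false, true) with hu_def
    have table : ∀ p : Bool × Bool, ⁅ba p, u⁆ = (ba.repr (ba p) (false, false)) • u := by
      rintro ⟨c, x⟩
      cases c <;> cases x
      · simpa [Basis.repr_self, Finsupp.single_apply] using ha1 false
      · simp [hu_def, Basis.repr_self, Finsupp.single_apply]
      · simpa [Basis.repr_self, Finsupp.single_apply] using ha2 true false false true (by decide)
      · simpa [Basis.repr_self, Finsupp.single_apply] using ha2 true false true true (by decide)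
    have hu : ∀ z : a, ⁅z, u⁆ = (ba.coord (false, false)) z • u := by
      have key0 : (-(LieAlgebra.ad ℝ a u)) = (ba.coord (false, false)).smulRight u := by
        apply ba.ext
        intro p
        simp only [LinearMap.neg_apply, LieAlgebra.ad_apply, LinearMap.smulRight_apply,
          Basis.coord_apply]
        rw [← table p, ← lie_skew, neg_neg]
      intro z
      have := congrFun (congrArg (fun (L : a →ₗ[ℝ] a) => (L : a → a)) key0) z
      simp only [LinearMap.neg_apply, LieAlgebra.ad_apply, LinearMap.smulRight_apply] at this
      rw [← lie_skew u z] at this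
      simpa using this
    set x : m := e u with hx_def
    have key : ∀ y : m, ∃ t : ℝ, ⁅y, x⁆ = t • x := by
      intro y
      refine ⟨(ba.coord (false, false)) (e.symm y), ?_⟩
      have h1 : ⁅e.symm y, u⁆ = (ba.coord (false, false)) (e.symm y) • u := hu _
      have h2 := congrArg e h1
      rw [e.map_lie, e.apply_symm_apply] at h2
      rw [h2]
      exact e.toLinearEquiv.map_smul _ _
    have hx0 : x ≠ 0 := fun h =>
      ba.ne_zero (false, true) (e.toLinearEquiv.map_eq_zero_iff.mp h)
    set r : Fin 4 → ℝ := fun i => bm.repr x i with hr_def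
    have hxsum : x = r 0 • bm 0 + r 1 • bm 1 + r 2 • bm 2 + r 3 • bm 3 := by
      have h := bm.sum_repr x
      rw [Fin.sum_univ_four] at h
      exact h.symm
    have repr_eval : ∀ (i : Fin 4) (c0 c1 c2 c3 : ℝ),
        bm.repr (c0 • bm 0 + c1 • bm 1 + c2 • bm 2 + c3 • bm 3) i = ![c0, c1, c2, c3] i := by
      intro i c0 c1 c2 c3
      fin_cases i <;> simp [Basis.repr_self, Finsupp.single_apply]
    obtain ⟨s, hs⟩ := key (bm 2)
    have hs' : (r 1) • bm 0 + (-r 0) • bm 1 + (0:ℝ) • bm 2 + (0:ℝ) • bm 3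
        = (s * r 0) • bm 0 + (s * r 1) • bm 1 + (s * r 2) • bm 2 + (s * r 3) • bm 3 := by
      calc (r 1) • bm 0 + (-r 0) • bm 1 + (0:ℝ) • bm 2 + (0:ℝ) • bm 3
          = ⁅bm 2, x⁆ := by
            rw [hxsum]
            simp only [lie_add, lie_smul, t20, t21, t23, lie_self]
            module
        _ = s • x := hs
        _ = _ := by rw [hxsum]; module
    have e20 := (repr_eval 0 _ _ _ _).symm.trans
      ((congrArg (fun z => bm.repr z 0) hs').trans (repr_eval 0 _ _ _ _))
    have e21 := (repr_eval 1 _ _ _ _).symm.trans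
      ((congrArg (fun z => bm.repr z 1) hs').trans (repr_eval 1 _ _ _ _))
    simp only [Matrix.cons_val_zero, Matrix.cons_val_one, Matrix.head_cons] at e20 e21
    have hq : r 0 * (1 + s ^ 2) = 0 := by linear_combination -e21 - s * e20
    have hr0 : r 0 = 0 := by
      rcases mul_eq_zero.mp hq with h' | h'
      · exact h'
      · nlinarith [sq_nonneg s]
    have hr1 : r 1 = 0 := by rw [hr0, mul_zero] at e20; exact e20
    obtain ⟨t, ht⟩ := key (bm 0)
    have ht' : (-r 3) • bm 0 + (r 2) • bm 1 + (0:ℝ) • bm 2 + (0:ℝ) • bm 3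
        = (t * r 0) • bm 0 + (t * r 1) • bm 1 + (t * r 2) • bm 2 + (t * r 3) • bm 3 := by
      calc (-r 3) • bm 0 + (r 2) • bm 1 + (0:ℝ) • bm 2 + (0:ℝ) • bm 3
          = ⁅bm 0, x⁆ := by
            rw [hxsum]
            simp only [lie_add, lie_smul, t01, t02, t03, lie_self]
            module
        _ = t • x := ht
        _ = _ := by rw [hxsum]; module
    have e00 := (repr_eval 0 _ _ _ _).symm.trans
      ((congrArg (fun z => bm.repr z 0) ht').trans (repr_eval 0 _ _ _ _))
    have e01 := (repr_eval 1 _ _ _ _).symm.trans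
      ((congrArg (fun z => bm.repr z 1) ht').trans (repr_eval 1 _ _ _ _))
    simp only [Matrix.cons_val_zero, Matrix.cons_val_one, Matrix.head_cons] at e00 e01
    have hr3 : r 3 = 0 := by rw [hr0, mul_zero] at e00; linarith
    have hr2 : r 2 = 0 := by rw [hr1, mul_zero] at e01; exact e01
    apply hx0
    rw [hxsum, hr0, hr1, hr2, hr3]
    simp
  · -- Part 2: the complexifications are isomorphic
    set B1 : Basis (Bool × Bool) ℂ (ℂ ⊗[ℝ] a) := ba.baseChange ℂ with hB1
    set B2 : Basis (Fin 4) ℂ (ℂ ⊗[ℝ] m) := bm.baseChange ℂ with hB2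
    have T : ∀ i j : Fin 4, ⁅B2 i, B2 j⁆ = (1 : ℂ) ⊗ₜ[ℝ] ⁅bm i, bm j⁆ := by
      intro i j
      rw [hB2, Basis.baseChange_apply, Basis.baseChange_apply,
        LieAlgebra.ExtendScalars.bracket_tmul, one_mul]
    have T01 : ⁅B2 0, B2 1⁆ = 0 := by rw [T, t01, TensorProduct.tmul_zero]
    have T02 : ⁅B2 0, B2 2⁆ = B2 1 := by rw [T, t02, hB2, Basis.baseChange_apply]
    have T12 : ⁅B2 1, B2 2⁆ = -B2 0 := by
      rw [T, t12, TensorProduct.tmul_neg, hB2, Basis.baseChange_apply]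
    have T03 : ⁅B2 0, B2 3⁆ = -B2 0 := by
      rw [T, t03, TensorProduct.tmul_neg, hB2, Basis.baseChange_apply]
    have T13 : ⁅B2 1, B2 3⁆ = -B2 1 := by
      rw [T, t13, TensorProduct.tmul_neg, hB2, Basis.baseChange_apply]
    have T23 : ⁅B2 2, B2 3⁆ = 0 := by rw [T, t23, TensorProduct.tmul_zero]
    have T20 : ⁅B2 2, B2 0⁆ = -B2 1 := by rw [← lie_skew, T02]
    have T21 : ⁅B2 2, B2 1⁆ = B2 0 := by rw [← lie_skew, T12, neg_neg]
    have T30 : ⁅B2 3, B2 0⁆ = B2 0 := by rw [← lie_skew, T03, neg_neg]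
    have T31 : ⁅B2 3, B2 1⁆ = B2 1 := by rw [← lie_skew, T13, neg_neg]
    have T10 : ⁅B2 1, B2 0⁆ = 0 := by rw [← lie_skew, T01, neg_zero]
    have T32 : ⁅B2 3, B2 2⁆ = 0 := by rw [← lie_skew, T23, neg_zero]
    -- bracket table for B1
    have A : ∀ p q : Bool × Bool, ⁅B1 p, B1 q⁆ = (1 : ℂ) ⊗ₜ[ℝ] ⁅ba p, ba q⁆ := by
      intro p q
      rw [hB1, Basis.baseChange_apply, Basis.baseChange_apply,
        LieAlgebra.ExtendScalars.bracket_tmul, one_mul]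
    have A1 : ∀ c : Bool, ⁅B1 (c, false), B1 (c, true)⁆ = B1 (c, true) := by
      intro c; rw [A, ha1 c, hB1, Basis.baseChange_apply]
    have A1' : ∀ c : Bool, ⁅B1 (c, true), B1 (c, false)⁆ = -B1 (c, true) := by
      intro c; rw [← lie_skew, A1 c]
    have A2 : ∀ (c c' : Bool) (x y : Bool), c ≠ c' → ⁅B1 (c, x), B1 (c', y)⁆ = 0 := by
      intro c c' x y h; rw [A, ha2 c c' x y h, TensorProduct.tmul_zero]
    set I : ℂ := Complex.I with hI
    set v : Bool × Bool → ℂ ⊗[ℝ] m := fun p =>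
      match p with
      | (false, false) => (1/2 : ℂ) • B2 3 - (I/2) • B2 2
      | (false, true)  => B2 0 + I • B2 1
      | (true, false)  => (1/2 : ℂ) • B2 3 + (I/2) • B2 2
      | (true, true)   => B2 0 - I • B2 1
      with hv
    set w : Fin 4 → ℂ ⊗[ℝ] a := fun i =>
      match i with
      | 0 => (1/2 : ℂ) • B1 (false, true) + (1/2 : ℂ) • B1 (true, true)
      | 1 => (-(I/2)) • B1 (false, true) + (I/2) • B1 (true, true)
      | 2 => I • B1 (false, false) - I • B1 (true, false)
      | 3 => B1 (false, false) + B1 (true, false)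
      with hw
    set f : (ℂ ⊗[ℝ] a) →ₗ[ℂ] (ℂ ⊗[ℝ] m) := B1.constr ℂ v with hf
    set g : (ℂ ⊗[ℝ] m) →ₗ[ℂ] (ℂ ⊗[ℝ] a) := B2.constr ℂ w with hg
    have hfB : ∀ p, f (B1 p) = v p := fun p => B1.constr_basis ℂ v p
    have hgB : ∀ i, g (B2 i) = w i := fun i => B2.constr_basis ℂ w i
    have ladm : ∀ (x y z : ℂ ⊗[ℝ] m), ⁅x, y + z⁆ = ⁅x, y⁆ + ⁅x, z⁆ := fun x y z => lie_add x y z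
    have adlm : ∀ (x y z : ℂ ⊗[ℝ] m), ⁅x + y, z⁆ = ⁅x, z⁆ + ⁅y, z⁆ := fun x y z => add_lie x y z
    have lsbm : ∀ (x y z : ℂ ⊗[ℝ] m), ⁅x, y - z⁆ = ⁅x, y⁆ - ⁅x, z⁆ := fun x y z => lie_sub x y z
    have sblm : ∀ (x y z : ℂ ⊗[ℝ] m), ⁅x - y, z⁆ = ⁅x, z⁆ - ⁅y, z⁆ := fun x y z => sub_lie x y z
    have lslfm : ∀ (x : ℂ ⊗[ℝ] m), ⁅x, x⁆ = 0 := fun x => lie_self x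
    have lzm : ∀ (x : ℂ ⊗[ℝ] m), ⁅x, (0 : ℂ ⊗[ℝ] m)⁆ = 0 := fun x => lie_zero x
    have zlm : ∀ (x : ℂ ⊗[ℝ] m), ⁅(0 : ℂ ⊗[ℝ] m), x⁆ = 0 := fun x => zero_lie x
    have slm : ∀ (t : ℂ) (x y : ℂ ⊗[ℝ] m), ⁅t • x, y⁆ = t • ⁅x, y⁆ := fun t x y => smul_lie t x y
    have lsm : ∀ (t : ℂ) (x y : ℂ ⊗[ℝ] m), ⁅x, t • y⁆ = t • ⁅x, y⁆ := fun t x y => lie_smul t x y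
    have lada : ∀ (x y z : ℂ ⊗[ℝ] a), ⁅x, y + z⁆ = ⁅x, y⁆ + ⁅x, z⁆ := fun x y z => lie_add x y z
    have adla : ∀ (x y z : ℂ ⊗[ℝ] a), ⁅x + y, z⁆ = ⁅x, z⁆ + ⁅y, z⁆ := fun x y z => add_lie x y z
    have sla : ∀ (t : ℂ) (x y : ℂ ⊗[ℝ] a), ⁅t • x, y⁆ = t • ⁅x, y⁆ := fun t x y => smul_lie t x y
    have lsa : ∀ (t : ℂ) (x y : ℂ ⊗[ℝ] a), ⁅x, t • y⁆ = t • ⁅x, y⁆ := fun t x y => lie_smul t x y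
    -- f ∘ g = id
    have fg0 : f (g (B2 0)) = B2 0 := by
      simp only [hgB, hw, map_add, map_sub, map_smul, hfB, hv]
      match_scalars <;> ring
    have fg1 : f (g (B2 1)) = B2 1 := by
      simp only [hgB, hw, map_add, map_sub, map_smul, hfB, hv]
      match_scalars <;> (try simp [hI]) <;> (try ring_nf) <;> (try simp [Complex.I_sq]) <;> (try ring_nf) <;> (try ring1)
    have fg2 : f (g (B2 2)) = B2 2 := by
      simp only [hgB, hw, map_add, map_sub, map_smul, hfB, hv]
      match_scalars <;> (try simp [hI]) <;> (try ring_nf) <;> (try simp [Complex.I_sq]) <;> (try ring_nf) <;> (try ring1)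
    have fg3 : f (g (B2 3)) = B2 3 := by
      simp only [hgB, hw, map_add, map_sub, map_smul, hfB, hv]
      match_scalars <;> ring
    have hfg : f.comp g = LinearMap.id := by
      apply B2.ext
      intro i
      fin_cases i
      · exact fg0
      · exact fg1
      · exact fg2
      · exact fg3
    -- g ∘ f = id
    have gf1 : g (f (B1 (false, false))) = B1 (false, false) := by
      simp only [hfB, hv, map_add, map_sub, map_smul, hgB, hw]
      match_scalars <;> (try simp [hI]) <;> (try ring_nf) <;> (try simp [Complex.I_sq]) <;> (try ring_nf) <;> (try ring1)
    have gf2 : g (f (B1 (false, true))) = B1 (false, true) := by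
      simp only [hfB, hv, map_add, map_sub, map_smul, hgB, hw]
      match_scalars <;> (try simp [hI]) <;> (try ring_nf) <;> (try simp [Complex.I_sq]) <;> (try ring_nf) <;> (try ring1)
    have gf3 : g (f (B1 (true, false))) = B1 (true, false) := by
      simp only [hfB, hv, map_add, map_sub, map_smul, hgB, hw]
      match_scalars <;> (try simp [hI]) <;> (try ring_nf) <;> (try simp [Complex.I_sq]) <;> (try ring_nf) <;> (try ring1)
    have gf4 : g (f (B1 (true, true))) = B1 (true, true) := by
      simp only [hfB, hv, map_add, map_sub, map_smul, hgB, hw]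
      match_scalars <;> (try simp [hI]) <;> (try ring_nf) <;> (try simp [Complex.I_sq]) <;> (try ring_nf) <;> (try ring1)
    have hgf : g.comp f = LinearMap.id := by
      apply B1.ext
      rintro ⟨c, x⟩
      cases c <;> cases x
      · exact gf1
      · exact gf2
      · exact gf3
      · exact gf4
    -- bracket preservation on basis
    have expand : ∀ p q : Bool × Bool, True := fun _ _ => trivial
    have br0 : ∀ (p q : Bool × Bool), ⁅ba p, ba q⁆ = 0 →
        ⁅f (B1 p), f (B1 q)⁆ = f ⁅B1 p, B1 q⁆ → True := fun _ _ _ _ => trivial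
    clear expand br0
    have brz : ∀ p q : Bool × Bool, ⁅B1 p, B1 q⁆ = 0 →
        ⁅v p, v q⁆ = 0 → ⁅f (B1 p), f (B1 q)⁆ = f ⁅B1 p, B1 q⁆ := by
      intro p q h1 h2
      rw [h1, map_zero, hfB, hfB, h2]
    have hbr : ∀ p q : Bool × Bool, ⁅f (B1 p), f (B1 q)⁆ = f ⁅B1 p, B1 q⁆ := by
      have vff := hfB (false, false)
      have vft := hfB (false, true)
      have vtf := hfB (true, false)
      have vtt := hfB (true, true)
      rintro ⟨c, x⟩ ⟨c', y⟩
      cases c <;> cases x <;> cases c' <;> cases y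
      · exact brz _ _ (lie_self _) (lie_self _)
      · rw [A1 false]
        simp only [hfB, hv]
        simp only [ladm, adlm, lsbm, sblm, lsm, slm, lslfm, lzm, zlm,
          T01, T02, T03, T10, T12, T13, T20, T21, T23, T30, T31, T32,
          smul_neg, smul_zero]
        match_scalars <;> (try simp [hI]) <;> (try ring_nf) <;> (try simp [Complex.I_sq]) <;> (try ring_nf) <;> (try ring1)
      · refine brz _ _ (A2 false true false false (by decide)) ?_
        simp only [hv]
        simp only [ladm, adlm, lsbm, sblm, lsm, slm, lslfm, lzm, zlm,
          T01, T02, T03, T10, T12, T13, T20, T21, T23, T30, T31, T32,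
          smul_neg, smul_zero]
        match_scalars <;> (try simp [hI]) <;> (try ring_nf) <;> (try simp [Complex.I_sq]) <;> (try ring_nf) <;> (try ring1)
      · refine brz _ _ (A2 false true false true (by decide)) ?_
        simp only [hv]
        simp only [ladm, adlm, lsbm, sblm, lsm, slm, lslfm, lzm, zlm,
          T01, T02, T03, T10, T12, T13, T20, T21, T23, T30, T31, T32,
          smul_neg, smul_zero]
        match_scalars <;> (try simp [hI]) <;> (try ring_nf) <;> (try simp [Complex.I_sq]) <;> (try ring_nf) <;> (try ring1)
      · rw [A1' false]
        simp only [map_neg, hfB, hv]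
        simp only [ladm, adlm, lsbm, sblm, lsm, slm, lslfm, lzm, zlm,
          T01, T02, T03, T10, T12, T13, T20, T21, T23, T30, T31, T32,
          smul_neg, smul_zero]
        match_scalars <;> (try simp [hI]) <;> (try ring_nf) <;> (try simp [Complex.I_sq]) <;> (try ring_nf) <;> (try ring1)
      · exact brz _ _ (lie_self _) (lie_self _)
      · refine brz _ _ (A2 false true true false (by decide)) ?_
        simp only [hv]
        simp only [ladm, adlm, lsbm, sblm, lsm, slm, lslfm, lzm, zlm,
          T01, T02, T03, T10, T12, T13, T20, T21, T23, T30, T31, T32,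
          smul_neg, smul_zero]
        match_scalars <;> (try simp [hI]) <;> (try ring_nf) <;> (try simp [Complex.I_sq]) <;> (try ring_nf) <;> (try ring1)
      · refine brz _ _ (A2 false true true true (by decide)) ?_
        simp only [hv]
        simp only [ladm, adlm, lsbm, sblm, lsm, slm, lslfm, lzm, zlm,
          T01, T02, T03, T10, T12, T13, T20, T21, T23, T30, T31, T32,
          smul_neg, smul_zero]
        match_scalars <;> (try simp [hI]) <;> (try ring_nf) <;> (try simp [Complex.I_sq]) <;> (try ring_nf) <;> (try ring1)
      · refine brz _ _ (A2 true false false false (by decide)) ?_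
        simp only [hv]
        simp only [ladm, adlm, lsbm, sblm, lsm, slm, lslfm, lzm, zlm,
          T01, T02, T03, T10, T12, T13, T20, T21, T23, T30, T31, T32,
          smul_neg, smul_zero]
        match_scalars <;> (try simp [hI]) <;> (try ring_nf) <;> (try simp [Complex.I_sq]) <;> (try ring_nf) <;> (try ring1)
      · refine brz _ _ (A2 true false false true (by decide)) ?_
        simp only [hv]
        simp only [ladm, adlm, lsbm, sblm, lsm, slm, lslfm, lzm, zlm,
          T01, T02, T03, T10, T12, T13, T20, T21, T23, T30, T31, T32,
          smul_neg, smul_zero]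
        match_scalars <;> (try simp [hI]) <;> (try ring_nf) <;> (try simp [Complex.I_sq]) <;> (try ring_nf) <;> (try ring1)
      · exact brz _ _ (lie_self _) (lie_self _)
      · rw [A1 true]
        simp only [hfB, hv]
        simp only [ladm, adlm, lsbm, sblm, lsm, slm, lslfm, lzm, zlm,
          T01, T02, T03, T10, T12, T13, T20, T21, T23, T30, T31, T32,
          smul_neg, smul_zero]
        match_scalars <;> (try simp [hI]) <;> (try ring_nf) <;> (try simp [Complex.I_sq]) <;> (try ring_nf) <;> (try ring1)
      · refine brz _ _ (A2 true false true false (by decide)) ?_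
        simp only [hv]
        simp only [ladm, adlm, lsbm, sblm, lsm, slm, lslfm, lzm, zlm,
          T01, T02, T03, T10, T12, T13, T20, T21, T23, T30, T31, T32,
          smul_neg, smul_zero]
        match_scalars <;> (try simp [hI]) <;> (try ring_nf) <;> (try simp [Complex.I_sq]) <;> (try ring_nf) <;> (try ring1)
      · refine brz _ _ (A2 true false true true (by decide)) ?_
        simp only [hv]
        simp only [ladm, adlm, lsbm, sblm, lsm, slm, lslfm, lzm, zlm,
          T01, T02, T03, T10, T12, T13, T20, T21, T23, T30, T31, T32,
          smul_neg, smul_zero]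
        match_scalars <;> (try simp [hI]) <;> (try ring_nf) <;> (try simp [Complex.I_sq]) <;> (try ring_nf) <;> (try ring1)
      · rw [A1' true]
        simp only [map_neg, hfB, hv]
        simp only [ladm, adlm, lsbm, sblm, lsm, slm, lslfm, lzm, zlm,
          T01, T02, T03, T10, T12, T13, T20, T21, T23, T30, T31, T32,
          smul_neg, smul_zero]
        match_scalars <;> (try simp [hI]) <;> (try ring_nf) <;> (try simp [Complex.I_sq]) <;> (try ring_nf) <;> (try ring1)
      · exact brz _ _ (lie_self _) (lie_self _)
    -- bracket preservation in general, via bilinearity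
    have hlie : ∀ x y : ℂ ⊗[ℝ] a, f ⁅x, y⁆ = ⁅f x, f y⁆ := by
      have hbil : (LinearMap.mk₂ ℂ (fun x y : ℂ ⊗[ℝ] a => f ⁅x, y⁆)
            (fun x x' y => by simp only [adla, map_add])
            (fun c x y => by simp only [sla, map_smul])
            (fun x y y' => by simp only [lada, map_add])
            (fun c x y => by simp only [lsa, map_smul]))
          = (LinearMap.mk₂ ℂ (fun x y : ℂ ⊗[ℝ] a => ⁅f x, f y⁆)
            (fun x x' y => by simp only [map_add, adlm])
            (fun c x y => by simp only [map_smul, slm])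
            (fun x y y' => by simp only [map_add, ladm])
            (fun c x y => by simp only [map_smul, lsm])) := by
        apply B1.ext
        intro p
        apply B1.ext
        intro q
        simp only [LinearMap.mk₂_apply]
        exact (hbr p q).symm
      intro x y
      have := DFunLike.congr_fun (DFunLike.congr_fun hbil x) y
      simpa only [LinearMap.mk₂_apply] using this
    exact ⟨{ toLinearMap := f,
             map_lie' := fun {x y} => hlie x y,
             invFun := g,
             left_inv := fun z => LinearMap.congr_fun hgf z,
             right_inv := fun z => LinearMap.congr_fun hfg z }⟩
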